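/- arXiv:1807.01057 — 2 statements merged into one kernel-verified Lean document; each statement's English description precedes it below -/
import Mathlib

section
/- Let K be a Markov kernel on E with invariant probability measure π, and suppose there exist i ∈ ℕ and ε ∈ (0,1] with K^i(x,·) ≥ ε K^i(y,·) for all x,y. Then for every bounded measurable f the series T(f)(x) := Σ_{j=0}^∞ [K^j(f)(x) − π(f)] converges absolutely and the resulting operator satisfies the uniform bound ‖T(f)‖ ≤ (2i/ε)·‖f‖. -/
open MeasureTheory ProbabilityTheory

variable {E : Type} [MeasurableSpace E]

/-- Iterates of a Markov kernel: `kiter K n x` is the `n`-step transition law from `x`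
(`kiter K 0 x = δ_x`). -/
noncomputable def kiter (K : Kernel E E) : ℕ → E → Measure E
  | 0, x => Measure.dirac x
  | n + 1, x => Measure.bind (kiter K n x) (fun y => K y)

/-- The mcResolvent operator `T(f)(x) = Σ_{j≥0} [K^j(f)(x) − π(f)]`. -/
noncomputable def mcResolvent (K : Kernel E E) (π : Measure E) (f : E → ℝ) (x : E) : ℝ :=
  ∑' j : ℕ, ((∫ y, f y ∂(kiter K j x)) - ∫ y, f y ∂π)

/-- Kernel version of the iterate. -/
noncomputable def kIter (K : Kernel E E) : ℕ → Kernel E E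
  | 0 => Kernel.id
  | n + 1 => K ∘ₖ kIter K n

lemma kiter_eq (K : Kernel E E) : ∀ (n : ℕ) (x : E), kiter K n x = kIter K n x
  | 0, x => by simp [kiter, kIter, Kernel.id_apply]
  | n + 1, x => by
      rw [kiter, kIter, Kernel.comp_apply, kiter_eq K n x]

lemma kIter_markov (K : Kernel E E) [IsMarkovKernel K] (n : ℕ) :
    IsMarkovKernel (kIter K n) := by
  induction n with
  | zero => rw [kIter]; infer_instance
  | succ n ih => rw [kIter]; exact @Kernel.IsMarkovKernel.comp _ _ _ _ _ _ _ _ _ ih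

instance (K : Kernel E E) [IsMarkovKernel K] (n : ℕ) : IsMarkovKernel (kIter K n) :=
  kIter_markov K n

lemma kIter_add (K : Kernel E E) [IsMarkovKernel K] (m n : ℕ) :
    kIter K (m + n) = kIter K m ∘ₖ kIter K n := by
  induction m with
  | zero => simp [kIter, Kernel.id_comp]
  | succ m ih =>
      have : m + 1 + n = (m + n) + 1 := by omega
      rw [this, kIter, ih, kIter, Kernel.comp_assoc]

lemma kIter_succ' (K : Kernel E E) [IsMarkovKernel K] (n : ℕ) :
    kIter K (n + 1) = kIter K n ∘ₖ K := by
  rw [kIter_add K n 1]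
  congr 1
  rw [kIter, kIter, Kernel.comp_id]

lemma pi_invariant (K : Kernel E E) [IsMarkovKernel K] (π : Measure E)
    (hπ : π.bind (fun x => K x) = π) (n : ℕ) :
    π.bind (fun x => kIter K n x) = π := by
  induction n with
  | zero => simpa [kIter, Kernel.id_apply] using Measure.bind_dirac π
  | succ n ih =>
      have h1 : (fun x => kIter K (n + 1) x) = fun x => (K x).bind (kIter K n) := by
        funext x
        rw [kIter_succ', Kernel.comp_apply]
      rw [h1, ← Measure.bind_bind K.measurable.aemeasurable (kIter K n).measurable.aemeasurable, hπ, ih]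

lemma integrable_of_bdd {μ : Measure E} [IsFiniteMeasure μ] {g : E → ℝ} (hg : Measurable g)
    {C : ℝ} (hb : ∀ x, |g x| ≤ C) : Integrable g μ := by
  refine (integrable_const C).mono' hg.aestronglyMeasurable ?_
  exact Filter.Eventually.of_forall fun x => by simpa [Real.norm_eq_abs] using hb x

lemma abs_integral_le_of_bdd {μ : Measure E} [IsProbabilityMeasure μ] {g : E → ℝ}
    (hg : Measurable g) {C : ℝ} (hb : ∀ x, |g x| ≤ C) : |∫ y, g y ∂μ| ≤ C := by
  calc |∫ y, g y ∂μ| ≤ ∫ y, |g y| ∂μ := by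
        simpa [Real.norm_eq_abs] using norm_integral_le_integral_norm (μ := μ) g
    _ ≤ ∫ _, C ∂μ := by
        refine integral_mono ((integrable_of_bdd hg hb).abs) (integrable_const C) fun y => hb y
    _ = C := by simp

lemma integral_bind_bdd (μ : Measure E) [IsProbabilityMeasure μ] (κ : Kernel E E)
    [IsMarkovKernel κ] {g : E → ℝ} (hg : Measurable g) {C : ℝ} (hb : ∀ x, |g x| ≤ C) :
    ∫ y, g y ∂(μ.bind κ) = ∫ x, ∫ y, g y ∂(κ x) ∂μ := by
  have hsnd : (μ ⊗ₘ κ).snd = μ.bind (fun x => κ x) := by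
    ext s hs
    rw [Measure.snd_apply hs, Measure.compProd_apply (measurable_snd hs),
      Measure.bind_apply hs κ.measurable.aemeasurable]
    rfl
  have hint : Integrable (fun p : E × E => g p.2) (μ ⊗ₘ κ) := by
    refine (integrable_const C).mono' (hg.comp measurable_snd).aestronglyMeasurable ?_
    exact Filter.Eventually.of_forall fun p => by simpa [Real.norm_eq_abs] using hb p.2
  rw [← hsnd, Measure.snd,
    integral_map measurable_snd.aemeasurable hg.aestronglyMeasurable,
    MeasureTheory.Measure.integral_compProd hint]

lemma measurable_integral_kernel (κ : Kernel E E) [IsMarkovKernel κ] {g : E → ℝ}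
    (hg : Measurable g) : Measurable fun x => ∫ y, g y ∂(κ x) := by
  have h : StronglyMeasurable fun p : E × E => g p.2 :=
    (hg.comp measurable_snd).stronglyMeasurable
  exact (h.integral_kernel_prod_right' (κ := κ)).measurable

lemma coupling_one_sided (μ ν : Measure E) [IsProbabilityMeasure μ] [IsProbabilityMeasure ν]
    {ε : ℝ} (hε0 : 0 < ε) (hε1 : ε ≤ 1) (hle : ENNReal.ofReal ε • ν ≤ μ)
    {g : E → ℝ} (hg : Measurable g) {C : ℝ} (hb : ∀ x, |g x| ≤ C)
    {B : ℝ} (hosc : ∀ z w, g z - g w ≤ B) (z₀ : E) :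
    (∫ z, g z ∂μ) - ∫ z, g z ∂ν ≤ (1 - ε) * B := by
  haveI : Nonempty E := ⟨z₀⟩
  set εm : Measure E := ENNReal.ofReal ε • ν with hεm
  haveI : IsFiniteMeasure εm := by
    constructor
    rw [hεm, Measure.smul_apply, smul_eq_mul, measure_univ, mul_one]
    exact ENNReal.ofReal_lt_top
  set μ' : Measure E := μ - εm with hμ'
  have hdecomp : μ' + εm = μ := Measure.sub_add_cancel_of_le hle
  haveI : IsFiniteMeasure μ' := by
    refine isFiniteMeasure_of_le μ ?_
    rw [← hdecomp]; exact Measure.le_add_right le_rfl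
  have hintμ' : Integrable g μ' := integrable_of_bdd hg hb
  have hintεm : Integrable g εm := integrable_of_bdd hg hb
  have hintν : Integrable g ν := integrable_of_bdd hg hb
  have h1 : ∫ z, g z ∂μ = ∫ z, g z ∂μ' + ε * ∫ z, g z ∂ν := by
    rw [← hdecomp, integral_add_measure hintμ' hintεm, hεm, integral_smul_measure,
      ENNReal.toReal_ofReal hε0.le, smul_eq_mul]
  -- mass of μ'
  have hmass : (μ' Set.univ).toReal = 1 - ε := by
    rw [hμ', Measure.sub_apply MeasurableSet.univ hle, hεm, Measure.smul_apply,
      smul_eq_mul, measure_univ, measure_univ, mul_one,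
      ENNReal.toReal_sub_of_le (ENNReal.ofReal_le_one.2 hε1) ENNReal.one_ne_top,
      ENNReal.toReal_one, ENNReal.toReal_ofReal hε0.le]
  -- infimum of g
  have hbdd : BddBelow (Set.range g) := ⟨-C, by
    rintro _ ⟨z, rfl⟩
    have := hb z
    rw [abs_le] at this
    exact this.1⟩
  set c : ℝ := ⨅ z, g z with hc
  have hc_le : ∀ z, c ≤ g z := fun z => ciInf_le hbdd z
  have hc_ub : ∀ z, g z ≤ c + B := by
    intro z
    have h2 : g z - B ≤ c := le_ciInf fun w => by linarith [hosc z w]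
    linarith
  have hB0 : 0 ≤ B := by
    have := hosc z₀ z₀; linarith
  -- integrals of g - c
  have hμ'int : ∫ z, g z ∂μ' = (∫ z, (g z - c) ∂μ') + c * (1 - ε) := by
    rw [integral_sub hintμ' (integrable_const c), integral_const, measureReal_def, hmass, smul_eq_mul]
    ring
  have hνint : ∫ z, g z ∂ν = (∫ z, (g z - c) ∂ν) + c := by
    rw [integral_sub hintν (integrable_const c), integral_const, measureReal_def, measure_univ,
      ENNReal.toReal_one, one_smul]
    ring
  have hA_le : ∫ z, (g z - c) ∂μ' ≤ (1 - ε) * B := by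
    calc ∫ z, (g z - c) ∂μ' ≤ ∫ _, B ∂μ' :=
          integral_mono (hintμ'.sub (integrable_const c)) (integrable_const B)
            fun z => by linarith [hc_ub z]
      _ = (1 - ε) * B := by rw [integral_const, measureReal_def, hmass, smul_eq_mul]
  have hAν : 0 ≤ ∫ z, (g z - c) ∂ν :=
    integral_nonneg fun z => by simp only [Pi.zero_apply]; linarith [hc_le z]
  have hε1' : (0 : ℝ) ≤ 1 - ε := by linarith
  nlinarith [mul_nonneg hε1' hAν]

lemma osc_bound (K : Kernel E E) [IsMarkovKernel K] (i : ℕ) (hi : 1 ≤ i)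
    {ε : ℝ} (hε0 : 0 < ε) (hε1 : ε ≤ 1)
    (hmin : ∀ x y : E, ENNReal.ofReal ε • kIter K i y ≤ kIter K i x)
    {f : E → ℝ} (hf : Measurable f) {C : ℝ} (hb : ∀ x, |f x| ≤ C) :
    ∀ (j : ℕ) (x y : E),
      |(∫ z, f z ∂(kIter K j x)) - ∫ z, f z ∂(kIter K j y)| ≤ 2 * C * (1 - ε) ^ (j / i) := by
  intro j
  induction j using Nat.strong_induction_on with
  | _ j ih =>
    intro x y
    by_cases hj : j < i
    · have hdiv : j / i = 0 := Nat.div_eq_of_lt hj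
      rw [hdiv, pow_zero, mul_one]
      have h1 := abs_integral_le_of_bdd (μ := kIter K j x) hf hb
      have h2 := abs_integral_le_of_bdd (μ := kIter K j y) hf hb
      calc |(∫ z, f z ∂(kIter K j x)) - ∫ z, f z ∂(kIter K j y)|
          ≤ |∫ z, f z ∂(kIter K j x)| + |∫ z, f z ∂(kIter K j y)| := abs_sub _ _
        _ ≤ 2 * C := by linarith
    · push_neg at hj
      set m := j - i with hm
      have hmj : m + i = j := Nat.sub_add_cancel hj
      have hmlt : m < j := by omega
      set g : E → ℝ := fun z => ∫ w, f w ∂(kIter K m z) with hg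
      have hgmeas : Measurable g := measurable_integral_kernel (kIter K m) hf
      have hgbdd : ∀ z, |g z| ≤ C := fun z => abs_integral_le_of_bdd hf hb
      have hC0 : 0 ≤ C := le_trans (abs_nonneg _) (hb x)
      have hpow0 : (0:ℝ) ≤ (1 - ε) ^ (m / i) := pow_nonneg (by linarith) _
      set B : ℝ := 2 * C * (1 - ε) ^ (m / i) with hB
      have hosc : ∀ z w, g z - g w ≤ B := by
        intro z w
        have := ih m hmlt z w
        calc g z - g w ≤ |g z - g w| := le_abs_self _
          _ ≤ B := this
      have hrepr : ∀ u : E, (∫ z, f z ∂(kIter K j u)) = ∫ z, g z ∂(kIter K i u) := by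
        intro u
        have : kIter K j u = (kIter K i u).bind (fun z => kIter K m z) := by
          rw [← hmj, kIter_add, Kernel.comp_apply]
        rw [this, integral_bind_bdd _ _ hf hb]
      rw [hrepr x, hrepr y]
      have h1 := coupling_one_sided (kIter K i x) (kIter K i y) hε0 hε1 (hmin x y)
        hgmeas hgbdd hosc x
      have h2 := coupling_one_sided (kIter K i y) (kIter K i x) hε0 hε1 (hmin y x)
        hgmeas hgbdd hosc x
      have hdiv : j / i = m / i + 1 := by
        rw [← hmj, Nat.add_div_right _ (by omega)]
      rw [hdiv, pow_succ]
      rw [abs_sub_le_iff]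
      constructor
      · calc (∫ z, g z ∂(kIter K i x)) - ∫ z, g z ∂(kIter K i y) ≤ (1 - ε) * B := h1
          _ = 2 * C * ((1 - ε) ^ (m / i) * (1 - ε)) := by ring
      · calc (∫ z, g z ∂(kIter K i y)) - ∫ z, g z ∂(kIter K i x) ≤ (1 - ε) * B := h2
          _ = 2 * C * ((1 - ε) ^ (m / i) * (1 - ε)) := by ring

lemma dev_bound (K : Kernel E E) [IsMarkovKernel K] (π : Measure E) [IsProbabilityMeasure π]
    (hπ : π.bind (fun x => K x) = π) (i : ℕ) (hi : 1 ≤ i)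
    {ε : ℝ} (hε0 : 0 < ε) (hε1 : ε ≤ 1)
    (hmin : ∀ x y : E, ENNReal.ofReal ε • kIter K i y ≤ kIter K i x)
    {f : E → ℝ} (hf : Measurable f) {C : ℝ} (hb : ∀ x, |f x| ≤ C) :
    ∀ (j : ℕ) (x : E),
      |(∫ z, f z ∂(kIter K j x)) - ∫ z, f z ∂π| ≤ 2 * C * (1 - ε) ^ (j / i) := by
  intro j x
  set g : E → ℝ := fun z => ∫ w, f w ∂(kIter K j z) with hg
  have hgmeas : Measurable g := measurable_integral_kernel (kIter K j) hf
  have hgbdd : ∀ z, |g z| ≤ C := fun z => abs_integral_le_of_bdd hf hb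
  have hπf : ∫ z, f z ∂π = ∫ z, g z ∂π := by
    conv_lhs => rw [← pi_invariant K π hπ j]
    exact integral_bind_bdd π (kIter K j) hf hb
  set b : ℝ := 2 * C * (1 - ε) ^ (j / i) with hbdef
  have hosc := osc_bound K i hi hε0 hε1 hmin hf hb j
  have hging : Integrable g π := integrable_of_bdd hgmeas hgbdd
  have hub : ∫ z, g z ∂π ≤ g x + b := by
    calc ∫ z, g z ∂π ≤ ∫ _, g x + b ∂π := by
          refine integral_mono hging (integrable_const _) fun z => ?_
          have := hosc x z
          rw [abs_sub_le_iff] at this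
          linarith [this.2]
      _ = g x + b := by simp
  have hlb : g x - b ≤ ∫ z, g z ∂π := by
    calc g x - b = ∫ _, g x - b ∂π := by simp
      _ ≤ ∫ z, g z ∂π := by
          refine integral_mono (integrable_const _) hging fun z => ?_
          have := hosc x z
          rw [abs_sub_le_iff] at this
          linarith [this.1]
  rw [hπf, abs_sub_le_iff]
  constructor <;> linarith

lemma geom_div_summable_tsum (i : ℕ) (hi : 1 ≤ i) {ε : ℝ} (hε0 : 0 < ε) (hε1 : ε ≤ 1) :
    Summable (fun j : ℕ => (1 - ε) ^ (j / i)) ∧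
      (∑' j : ℕ, (1 - ε) ^ (j / i)) = i / ε := by
  haveI : NeZero i := ⟨by omega⟩
  set r : ℝ := 1 - ε with hr
  have hr0 : 0 ≤ r := by simp [hr]; linarith
  have hr1 : r < 1 := by simp [hr]; linarith
  set G : ℕ × Fin i → ℝ := fun p => r ^ p.1 with hG
  have hfiber : ∀ b : ℕ, Summable fun c : Fin i => G (b, c) := fun b => Summable.of_finite
  have htsum_fiber : ∀ b : ℕ, (∑' c : Fin i, G (b, c)) = (i : ℝ) * r ^ b := by
    intro b
    rw [tsum_fintype]
    show (Finset.univ : Finset (Fin i)).sum (fun _ => r ^ b) = _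
    rw [Finset.sum_const, Finset.card_univ, Fintype.card_fin, nsmul_eq_mul]
  have hsum2 : Summable fun b : ℕ => ∑' c : Fin i, G (b, c) := by
    simp_rw [htsum_fiber]
    exact (summable_geometric_of_lt_one hr0 hr1).mul_left _
  have hGsum : Summable G :=
    (summable_prod_of_nonneg fun p => pow_nonneg hr0 _).2 ⟨hfiber, hsum2⟩
  have he : (fun j : ℕ => (1 - ε) ^ (j / i)) = fun j => G (Nat.divModEquiv i j) := rfl
  constructor
  · rw [he]
    exact hGsum.comp_injective (Nat.divModEquiv i).injective
  · rw [he, (Nat.divModEquiv i).tsum_eq G, Summable.tsum_prod' hGsum hfiber]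
    simp_rw [htsum_fiber]
    rw [tsum_mul_left, tsum_geometric_of_lt_one hr0 hr1]
    rw [div_eq_mul_inv]
    congr 1
    rw [hr]; ring_nf

/-- Under the uniform minorization `K^i(x,·) ≥ ε K^i(y,·)`, for every bounded measurable `f`
the mcResolvent series converges absolutely at every point, and `‖T(f)‖ ≤ (2i/ε)‖f‖`. -/
theorem mcResolvent_summable_and_bound (K : Kernel E E) [IsMarkovKernel K]
    (π : Measure E) [IsProbabilityMeasure π] (hπ : π.bind (fun x => K x) = π)
    (i : ℕ) (hi : 1 ≤ i) (ε : ℝ) (hε : ε ∈ Set.Ioc (0 : ℝ) 1)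
    (hmin : ∀ x y : E, ENNReal.ofReal ε • kiter K i y ≤ kiter K i x)
    (f : E → ℝ) (hf : Measurable f) (C : ℝ) (hfb : ∀ x, |f x| ≤ C) :
    (∀ x : E, Summable (fun j : ℕ => |(∫ y, f y ∂(kiter K j x)) - ∫ y, f y ∂π|)) ∧
      ∀ x : E, |mcResolvent K π f x| ≤ (2 * i / ε) * ⨆ z : E, |f z| := by
  obtain ⟨hε0, hε1⟩ := hε
  have hmin' : ∀ x y : E, ENNReal.ofReal ε • kIter K i y ≤ kIter K i x := by
    intro x y
    rw [← kiter_eq, ← kiter_eq]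
    exact hmin x y
  obtain ⟨hgeo_sum, hgeo_tsum⟩ := geom_div_summable_tsum i hi hε0 hε1
  constructor
  · intro x
    have hC0 : 0 ≤ C := le_trans (abs_nonneg _) (hfb x)
    refine Summable.of_nonneg_of_le (fun j => abs_nonneg _) (fun j => ?_)
      (hgeo_sum.mul_left (2 * C))
    rw [kiter_eq]
    exact dev_bound K π hπ i hi hε0 hε1 hmin' hf hfb j x
  · intro x
    set C' : ℝ := ⨆ z : E, |f z| with hC'
    have hbdd : BddAbove (Set.range fun z : E => |f z|) := ⟨C, by
      rintro _ ⟨z, rfl⟩; exact hfb z⟩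
    have hfb' : ∀ z, |f z| ≤ C' := fun z => le_ciSup hbdd z
    have hC'0 : 0 ≤ C' := le_trans (abs_nonneg _) (hfb' x)
    have hterm : ∀ j : ℕ, |(∫ y, f y ∂(kiter K j x)) - ∫ y, f y ∂π|
        ≤ 2 * C' * (1 - ε) ^ (j / i) := by
      intro j
      rw [kiter_eq]
      exact dev_bound K π hπ i hi hε0 hε1 hmin' hf hfb' j x
    have hsum_abs : Summable (fun j : ℕ =>
        |(∫ y, f y ∂(kiter K j x)) - ∫ y, f y ∂π|) :=
      Summable.of_nonneg_of_le (fun j => abs_nonneg _) hterm (hgeo_sum.mul_left (2 * C'))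
    have h1 : |mcResolvent K π f x| ≤ ∑' j : ℕ,
        |(∫ y, f y ∂(kiter K j x)) - ∫ y, f y ∂π| := by
      rw [mcResolvent]
      simpa [Real.norm_eq_abs] using
        norm_tsum_le_tsum_norm (by simpa [Real.norm_eq_abs] using hsum_abs :
          Summable fun j : ℕ => ‖(∫ y, f y ∂(kiter K j x)) - ∫ y, f y ∂π‖)
    have h2 : (∑' j : ℕ, |(∫ y, f y ∂(kiter K j x)) - ∫ y, f y ∂π|)
        ≤ ∑' j : ℕ, 2 * C' * (1 - ε) ^ (j / i) :=
      Summable.tsum_le_tsum hterm hsum_abs (hgeo_sum.mul_left (2 * C'))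
    have h3 : (∑' j : ℕ, 2 * C' * (1 - ε) ^ (j / i)) = 2 * C' * (i / ε) := by
      rw [tsum_mul_left, hgeo_tsum]
    have h4 : 2 * C' * ((i : ℝ) / ε) = (2 * i / ε) * C' := by ring
    calc |mcResolvent K π f x| ≤ _ := h1
      _ ≤ _ := h2
      _ = 2 * C' * ((i : ℝ) / ε) := h3
      _ = (2 * i / ε) * C' := h4
end

section
/- With K, π, T and Γ as above, the following identity holds: π(Γ(f,f)) = π(−[f − π(f)]² + 2 f T(f)) for every bounded measurable f. Equivalently, π(Γ(f,f)) = Var_π(f) + 2 Σ_{j=1}^∞ Cov_π(f, K^j f), where Cov_π(f,g) := π((f−π(f))(g−π(g))). -/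
open MeasureTheory ProbabilityTheory
open scoped ENNReal NNReal

variable {E : Type} [MeasurableSpace E]

/-- `Γ(f,g)(x) = K[(T(f) − KT(f)(x))(T(g) − KT(g)(x))](x)`. -/
noncomputable def covFun (K : Kernel E E) (π : Measure E) (f g : E → ℝ) (x : E) : ℝ :=
  ∫ y, (mcResolvent K π f y - ∫ z, mcResolvent K π f z ∂(K x)) *
        (mcResolvent K π g y - ∫ z, mcResolvent K π g z ∂(K x)) ∂(K x)

/-- Covariance under `π` of two bounded measurable functions. -/
noncomputable def covPi (π : Measure E) (f g : E → ℝ) : ℝ :=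
  ∫ x, (f x - ∫ y, f y ∂π) * (g x - ∫ y, g y ∂π) ∂π

/-! ### Auxiliary lemmas -/

lemma kiter_measurable (K : Kernel E E) (n : ℕ) : Measurable (kiter K n) := by
  induction n with
  | zero => exact Measure.measurable_dirac
  | succ n ih => exact (Measure.measurable_bind' K.measurable).comp ih

instance kiter_prob (K : Kernel E E) [IsMarkovKernel K] (n : ℕ) (x : E) :
    IsProbabilityMeasure (kiter K n x) := by
  induction n with
  | zero => exact Measure.dirac.isProbabilityMeasure
  | succ n ih =>
    constructor
    rw [kiter, Measure.bind_apply MeasurableSet.univ K.measurable.aemeasurable]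
    simp [measure_univ]

/-- The kernel version of `kiter`. -/
noncomputable def kker (K : Kernel E E) (n : ℕ) : Kernel E E :=
  ⟨kiter K n, kiter_measurable K n⟩

@[simp] lemma kker_apply (K : Kernel E E) (n : ℕ) (x : E) : kker K n x = kiter K n x := rfl

instance (K : Kernel E E) [IsMarkovKernel K] (n : ℕ) : IsMarkovKernel (kker K n) :=
  ⟨fun x => kiter_prob K n x⟩

lemma integrable_of_bound (μ : Measure E) [IsFiniteMeasure μ] {g : E → ℝ} (hg : Measurable g)
    {C : ℝ} (hb : ∀ x, |g x| ≤ C) : Integrable g μ :=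
  ⟨hg.aestronglyMeasurable, HasFiniteIntegral.of_bounded
    (Filter.Eventually.of_forall fun x => by simpa [Real.norm_eq_abs] using hb x)⟩

/-- Bochner integral against a bind. -/
lemma integral_bind' (μ : Measure E) [IsProbabilityMeasure μ] (κ : Kernel E E)
    [IsMarkovKernel κ] (g : E → ℝ) (hg : Measurable g) (C : ℝ) (hb : ∀ x, |g x| ≤ C) :
    ∫ y, g y ∂(μ.bind κ) = ∫ x, ∫ y, g y ∂(κ x) ∂μ := by
  have hmap : μ.bind κ = (μ.compProd κ).map Prod.snd := by
    ext s hs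
    rw [Measure.map_apply measurable_snd hs,
      Measure.compProd_apply (measurable_snd hs),
      Measure.bind_apply hs κ.measurable.aemeasurable]
    rfl
  have hint : Integrable (fun p : E × E => g p.2) (μ.compProd κ) := by
    refine ⟨(hg.comp measurable_snd).aestronglyMeasurable, ?_⟩
    exact HasFiniteIntegral.of_bounded (C := C)
      (Filter.Eventually.of_forall fun p => by simpa [Real.norm_eq_abs] using hb p.2)
  have h1 : ∫ y, g y ∂((μ.compProd κ).map Prod.snd) = ∫ p : E × E, g p.2 ∂(μ.compProd κ) :=
    integral_map measurable_snd.aemeasurable hg.aestronglyMeasurable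
  rw [hmap, h1, Measure.integral_compProd hint]

section
variable (K : Kernel E E) [IsMarkovKernel K]

lemma kiter_add (m n : ℕ) (x : E) :
    kiter K (m + n) x = (kiter K m x).bind (kiter K n) := by
  induction n with
  | zero => simp [kiter, Measure.bind_dirac]
  | succ n ih =>
    show Measure.bind (kiter K (m + n) x) _ = _
    rw [ih, Measure.bind_bind (kiter_measurable K n).aemeasurable K.measurable.aemeasurable]
    rfl

lemma kiter_one (x : E) : kiter K 1 x = K x := by
  show Measure.bind (Measure.dirac x) _ = K x
  rw [Measure.dirac_bind K.measurable]

/-- Measurability of `x ↦ ∫ g d(kiter K n x)`. -/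
lemma measurable_kiter_integral (n : ℕ) {g : E → ℝ} (hg : Measurable g) :
    Measurable fun x => ∫ y, g y ∂(kiter K n x) := by
  have : StronglyMeasurable fun x => ∫ y, (fun p : E × E => g p.2) (x, y) ∂(kker K n x) :=
    StronglyMeasurable.integral_kernel_prod_right'
      ((hg.comp measurable_snd).stronglyMeasurable)
  simpa using this.measurable

lemma kiter_integral_bound (n : ℕ) {g : E → ℝ} {C : ℝ} (hb : ∀ x, |g x| ≤ C) (x : E) :
    |∫ y, g y ∂(kiter K n x)| ≤ C := by
  have := norm_integral_le_of_norm_le_const (μ := kiter K n x) (f := g) (C := C)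
    (Filter.Eventually.of_forall fun y => by simpa [Real.norm_eq_abs] using hb y)
  simpa [Real.norm_eq_abs, measure_univ] using this

lemma kiter_integral_add (m n : ℕ) {g : E → ℝ} (hg : Measurable g) {C : ℝ}
    (hb : ∀ x, |g x| ≤ C) (x : E) :
    ∫ y, g y ∂(kiter K (m + n) x)
      = ∫ z, (∫ y, g y ∂(kiter K n z)) ∂(kiter K m x) := by
  rw [kiter_add]
  exact integral_bind' (kiter K m x) (kker K n) g hg C hb

/-- Invariance of `π` under `kiter`. -/
lemma kiter_invariant (π : Measure E) [IsProbabilityMeasure π]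
    (hπ : π.bind (fun x => K x) = π) (n : ℕ) : π.bind (kiter K n) = π := by
  induction n with
  | zero => exact Measure.bind_dirac
  | succ n ih =>
    have h1 : (kiter K (n + 1) : E → Measure E) = fun x => (K x).bind (kiter K n) := by
      funext x
      have := kiter_add K 1 n x
      rw [kiter_one] at this
      simpa [Nat.add_comm] using this
    rw [h1, ← Measure.bind_bind K.measurable.aemeasurable (kiter_measurable K n).aemeasurable, hπ, ih]

lemma kiter_integral_invariant (π : Measure E) [IsProbabilityMeasure π]
    (hπ : π.bind (fun x => K x) = π) (n : ℕ) {g : E → ℝ} (hg : Measurable g) {C : ℝ}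
    (hb : ∀ x, |g x| ≤ C) :
    ∫ x, (∫ y, g y ∂(kiter K n x)) ∂π = ∫ y, g y ∂π := by
  conv_rhs => rw [← kiter_invariant K π hπ n]
  exact (integral_bind' π (kker K n) g hg C hb).symm

end

lemma split_integral {ε : ℝ} (hε : ε ∈ Set.Ioc (0:ℝ) 1) (μ ν : Measure E)
    [IsProbabilityMeasure μ] [IsProbabilityMeasure ν]
    (hle : ENNReal.ofReal ε • ν ≤ μ) {g : E → ℝ} (hg : Measurable g)
    {a b : ℝ} (hab : ∀ z, a ≤ g z ∧ g z ≤ b) :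
    ∃ A', (a * (1 - ε) ≤ A' ∧ A' ≤ b * (1 - ε)) ∧
      ∫ z, g z ∂μ = A' + ε * ∫ z, g z ∂ν := by
  obtain ⟨hε0, hε1⟩ := hε
  set c : ℝ≥0∞ := ENNReal.ofReal ε with hc
  haveI : IsFiniteMeasure (c • ν) := isFiniteMeasure_of_le μ hle
  set μ' : Measure E := μ - c • ν with hμ'
  haveI : IsFiniteMeasure μ' := isFiniteMeasure_of_le μ Measure.sub_le
  have hsplit : μ' + c • ν = μ := Measure.sub_add_cancel_of_le hle
  have hCg : ∀ z, |g z| ≤ |a| + |b| := fun z => by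
    rcases hab z with ⟨h1, h2⟩
    have ha := abs_nonneg a; have hb' := abs_nonneg b
    have h3 := neg_abs_le a; have h4 := le_abs_self b
    exact abs_le.mpr ⟨by linarith, by linarith⟩
  have hint : ∀ (ρ : Measure E), IsFiniteMeasure ρ → Integrable g ρ := fun ρ hρ =>
    @integrable_of_bound E _ ρ hρ g hg _ hCg
  have hintμ' : Integrable g μ' := hint μ' inferInstance
  have hintcν : Integrable g (c • ν) := hint (c • ν) inferInstance
  have hμint : ∫ z, g z ∂μ = ∫ z, g z ∂μ' + ε * ∫ z, g z ∂ν := by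
    rw [← hsplit, integral_add_measure hintμ' hintcν, integral_smul_measure,
      ENNReal.toReal_ofReal hε0.le, smul_eq_mul]
  have hmass : (μ' Set.univ).toReal = 1 - ε := by
    have : μ' Set.univ = μ Set.univ - (c • ν) Set.univ :=
      Measure.sub_apply MeasurableSet.univ hle
    rw [this, measure_univ, Measure.smul_apply, measure_univ, smul_eq_mul, mul_one,
      ENNReal.toReal_sub_of_le (by simpa [hc] using ENNReal.ofReal_le_one.mpr hε1)
        ENNReal.one_ne_top]
    simp [hc, ENNReal.toReal_ofReal hε0.le]
  refine ⟨∫ z, g z ∂μ', ⟨?_, ?_⟩, hμint⟩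
  · have : ∫ z, (a : ℝ) ∂μ' ≤ ∫ z, g z ∂μ' :=
      integral_mono (integrable_const a) hintμ' fun z => (hab z).1
    rwa [integral_const, measureReal_def, hmass, smul_eq_mul, mul_comm] at this
  · have : ∫ z, g z ∂μ' ≤ ∫ z, (b : ℝ) ∂μ' :=
      integral_mono hintμ' (integrable_const b) fun z => (hab z).2
    rwa [integral_const, measureReal_def, hmass, smul_eq_mul, mul_comm] at this

section
variable [Nonempty E] (K : Kernel E E) [IsMarkovKernel K] {i : ℕ} (hi : 1 ≤ i) {ε : ℝ}
  (hε : ε ∈ Set.Ioc (0:ℝ) 1)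
  (hmin : ∀ x y : E, ENNReal.ofReal ε • kiter K i y ≤ kiter K i x)

include hε hmin in
lemma contraction_pair {g : E → ℝ} (hg : Measurable g) {D : ℝ}
    (hD : ∀ z w, |g z - g w| ≤ D) (x y : E) :
    |∫ z, g z ∂(kiter K i x) - ∫ z, g z ∂(kiter K i y)| ≤ (1 - ε) * D := by
  obtain ⟨z0⟩ := (inferInstance : Nonempty E)
  have hbdd : BddBelow (Set.range g) := ⟨g z0 - D, by
    rintro _ ⟨w, rfl⟩
    have := abs_le.mp (hD z0 w)
    linarith [this.2]⟩
  set a := sInf (Set.range g) with ha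
  have hal : ∀ z, a ≤ g z := fun z => csInf_le hbdd ⟨z, rfl⟩
  have hau : ∀ z, g z ≤ a + D := by
    intro z
    have : g z - D ≤ a := le_csInf ⟨g z0, z0, rfl⟩ (by
      rintro _ ⟨w, rfl⟩
      have := abs_le.mp (hD z w)
      linarith [this.1])
    linarith
  have hD0 : 0 ≤ D := le_trans (abs_nonneg _) (hD z0 z0)
  obtain ⟨A', ⟨hA1, hA2⟩, hA⟩ := split_integral hε (kiter K i x) (kiter K i y) (hmin x y) hg
    (a := a) (b := a + D) (fun z => ⟨hal z, hau z⟩)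
  obtain ⟨B', ⟨hB1, hB2⟩, hB⟩ := split_integral hε (kiter K i y) (kiter K i x) (hmin y x) hg
    (a := a) (b := a + D) (fun z => ⟨hal z, hau z⟩)
  set A := ∫ z, g z ∂(kiter K i x)
  set B := ∫ z, g z ∂(kiter K i y)
  obtain ⟨hε0, hε1⟩ := hε
  have key : (1 + ε) * (A - B) = A' - B' := by linarith
  have h1 : |A' - B'| ≤ (1 - ε) * D := abs_le.mpr ⟨by nlinarith, by nlinarith⟩
  have h2 : |A - B| ≤ (1 + ε) * |A - B| :=
    le_mul_of_one_le_left (abs_nonneg _) (by linarith)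
  calc |A - B| ≤ (1 + ε) * |A - B| := h2
    _ = |1 + ε| * |A - B| := by rw [abs_of_pos (show (0:ℝ) < 1 + ε by linarith)]
    _ = |(1 + ε) * (A - B)| := (abs_mul _ _).symm
    _ = |A' - B'| := by rw [key]
    _ ≤ (1 - ε) * D := h1

include hε hmin in
lemma contraction_iter (n : ℕ) {g : E → ℝ} (hg : Measurable g) {Cg : ℝ}
    (hgb : ∀ z, |g z| ≤ Cg) {D : ℝ} (hD : ∀ z w, |g z - g w| ≤ D) (x y : E) :
    |∫ z, g z ∂(kiter K (n * i) x) - ∫ z, g z ∂(kiter K (n * i) y)| ≤ (1 - ε) ^ n * D := by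
  induction n generalizing g Cg D with
  | zero =>
    simp only [Nat.zero_mul, pow_zero, one_mul, kiter]
    rw [integral_dirac' g x hg.stronglyMeasurable, integral_dirac' g y hg.stronglyMeasurable]
    exact hD x y
  | succ n ih =>
    have hadd : (n + 1) * i = n * i + i := by ring
    rw [hadd, kiter_integral_add K (n * i) i hg hgb x, kiter_integral_add K (n * i) i hg hgb y]
    have hGmeas : Measurable fun z => ∫ w, g w ∂(kiter K i z) :=
      measurable_kiter_integral K i hg
    have hGb : ∀ z, |∫ w, g w ∂(kiter K i z)| ≤ Cg := kiter_integral_bound K i hgb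
    have hGD : ∀ z w, |(∫ u, g u ∂(kiter K i z)) - ∫ u, g u ∂(kiter K i w)| ≤ (1 - ε) * D :=
      fun z w => contraction_pair K hε hmin hg hD z w
    have := ih hGmeas hGb hGD
    calc _ ≤ (1 - ε) ^ n * ((1 - ε) * D) := this
      _ = (1 - ε) ^ (n + 1) * D := by ring

include hε hmin in
lemma decay_pair {f : E → ℝ} (hf : Measurable f) {C : ℝ} (hfb : ∀ z, |f z| ≤ C)
    (j : ℕ) (x y : E) :
    |(∫ z, f z ∂(kiter K j x)) - ∫ z, f z ∂(kiter K j y)| ≤ 2 * C * (1 - ε) ^ (j / i) := by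
  have hsplit : j / i * i + j % i = j := Nat.div_add_mod' j i
  set g : E → ℝ := fun z => ∫ w, f w ∂(kiter K (j % i) z) with hgdef
  have hgm : Measurable g := measurable_kiter_integral K _ hf
  have hgb : ∀ z, |g z| ≤ C := kiter_integral_bound K _ hfb
  have hgD : ∀ z w, |g z - g w| ≤ 2 * C := fun z w => by
    calc |g z - g w| ≤ |g z| + |g w| := abs_sub _ _
      _ ≤ 2 * C := by linarith [hgb z, hgb w]
  have hx : ∫ z, f z ∂(kiter K j x) = ∫ z, g z ∂(kiter K (j / i * i) x) := by
    conv_lhs => rw [← hsplit]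
    exact kiter_integral_add K _ _ hf hfb x
  have hy : ∫ z, f z ∂(kiter K j y) = ∫ z, g z ∂(kiter K (j / i * i) y) := by
    conv_lhs => rw [← hsplit]
    exact kiter_integral_add K _ _ hf hfb y
  rw [hx, hy]
  have := contraction_iter K hε hmin (j / i) hgm hgb hgD x y
  calc _ ≤ (1 - ε) ^ (j / i) * (2 * C) := this
    _ = 2 * C * (1 - ε) ^ (j / i) := by ring

include hε hmin in
lemma decay (π : Measure E) [IsProbabilityMeasure π] (hπ : π.bind (fun x => K x) = π)
    {f : E → ℝ} (hf : Measurable f) {C : ℝ} (hfb : ∀ z, |f z| ≤ C) (j : ℕ) (x : E) :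
    |(∫ z, f z ∂(kiter K j x)) - ∫ z, f z ∂π| ≤ 2 * C * (1 - ε) ^ (j / i) := by
  have hKm : Measurable fun y => ∫ z, f z ∂(kiter K j y) := measurable_kiter_integral K j hf
  have hKb : ∀ y, |∫ z, f z ∂(kiter K j y)| ≤ C := kiter_integral_bound K j hfb
  have h1 : (∫ z, f z ∂(kiter K j x)) - ∫ z, f z ∂π
      = ∫ y, ((∫ z, f z ∂(kiter K j x)) - ∫ z, f z ∂(kiter K j y)) ∂π := by
    rw [integral_sub (integrable_const _) (integrable_of_bound π hKm hKb),
      integral_const, kiter_integral_invariant K π hπ j hf hfb, probReal_univ]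
    simp
  rw [h1]
  have := norm_integral_le_of_norm_le_const (μ := π)
    (f := fun y => (∫ z, f z ∂(kiter K j x)) - ∫ z, f z ∂(kiter K j y))
    (C := 2 * C * (1 - ε) ^ (j / i))
    (Filter.Eventually.of_forall fun y => by
      simpa [Real.norm_eq_abs] using decay_pair K hε hmin hf hfb j x y)
  simpa [Real.norm_eq_abs, measure_univ] using this

end

lemma summable_geom_div {q : ℝ} (hq0 : 0 ≤ q) (hq1 : q < 1) {i : ℕ} (hi : 1 ≤ i) :
    Summable fun j : ℕ => q ^ (j / i) := by
  haveI : NeZero i := ⟨by omega⟩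
  have hprod : Summable fun p : ℕ × Fin i => q ^ p.1 := by
    refine (summable_prod_of_nonneg (fun p => pow_nonneg hq0 _)).mpr ⟨fun n => ?_, ?_⟩
    · exact summable_of_finite_support (Set.Finite.subset (Set.finite_univ) (by simp))
    · have : (fun n : ℕ => ∑' _ : Fin i, q ^ n) = fun n : ℕ => (i : ℝ) * q ^ n := by
        funext n
        rw [tsum_const]
        simp [nsmul_eq_mul]
      rw [this]
      exact (summable_geometric_of_lt_one hq0 hq1).mul_left _
  exact ((Nat.divModEquiv i).summable_iff (f := fun p : ℕ × Fin i => q ^ p.1)).mpr hprod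

/-- Interchange of `tsum` and integral for uniformly dominated sequences. -/
lemma tsum_integral_swap (ρ : Measure E) [IsProbabilityMeasure ρ] (F : ℕ → E → ℝ)
    (hFm : ∀ j, Measurable (F j)) (B : ℕ → ℝ) (hFb : ∀ j x, |F j x| ≤ B j)
    (hB : Summable B) :
    ∑' j, ∫ x, F j x ∂ρ = ∫ x, (∑' j, F j x) ∂ρ := by
  refine integral_tsum_of_summable_integral_norm
    (fun j => integrable_of_bound ρ (hFm j) (hFb j)) ?_
  refine Summable.of_nonneg_of_le (fun j => integral_nonneg fun x => norm_nonneg _)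
    (fun j => ?_) hB
  have : ∫ x, ‖F j x‖ ∂ρ ≤ ∫ _x, B j ∂ρ :=
    integral_mono ((integrable_of_bound ρ (hFm j) (hFb j)).norm) (integrable_const _)
      (fun x => by simpa [Real.norm_eq_abs] using hFb j x)
  simpa [measure_univ] using this

/-- Asymptotic-variance identity:
`π(Γ(f,f)) = π(−[f − π(f)]² + 2 f T(f)) = Var_π(f) + 2 Σ_{j≥1} Cov_π(f, K^j f)`. -/
theorem covFun_integral_eq_iact (K : Kernel E E) [IsMarkovKernel K]
    (π : Measure E) [IsProbabilityMeasure π] (hπ : π.bind (fun x => K x) = π)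
    (i : ℕ) (hi : 1 ≤ i) (ε : ℝ) (hε : ε ∈ Set.Ioc (0 : ℝ) 1)
    (hmin : ∀ x y : E, ENNReal.ofReal ε • kiter K i y ≤ kiter K i x)
    (f : E → ℝ) (hf : Measurable f) (C : ℝ) (hfb : ∀ x, |f x| ≤ C) :
    (∫ x, covFun K π f f x ∂π
        = ∫ x, (-(f x - ∫ y, f y ∂π) ^ 2 + 2 * f x * mcResolvent K π f x) ∂π) ∧
      ∫ x, covFun K π f f x ∂π
        = (∫ x, (f x - ∫ y, f y ∂π) ^ 2 ∂π)
          + 2 * ∑' j : ℕ, covPi π f (fun x => ∫ y, f y ∂(kiter K (j + 1) x)) := by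
  classical
  -- E is nonempty since it carries a probability measure
  haveI hne : Nonempty E := by
    by_contra h
    rw [not_nonempty_iff] at h
    have h0 : π (Set.univ : Set E) = 0 := by
      simp [Set.univ_eq_empty_iff.mpr h]
    rw [measure_univ] at h0
    exact one_ne_zero h0
  have x0 : E := Classical.ofNonempty
  have hC0 : 0 ≤ C := le_trans (abs_nonneg _) (hfb x0)
  obtain ⟨hε0, hε1⟩ := hε
  set μf : ℝ := ∫ y, f y ∂π with hμf
  -- building blocks
  set a : ℕ → E → ℝ := fun j x => (∫ y, f y ∂(kiter K j x)) - μf with hadef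
  set B : ℕ → ℝ := fun j => 2 * C * (1 - ε) ^ (j / i) with hBdef
  have hB : Summable B := by
    have := (summable_geom_div (q := 1 - ε) (by linarith) (by linarith) hi).mul_left (2 * C)
    simpa [hBdef] using this
  have hBj : ∀ j, 0 ≤ B j := fun j => by
    have : (0:ℝ) ≤ (1 - ε) ^ (j / i) := pow_nonneg (by linarith) _
    simp only [hBdef]; positivity
  have haB : ∀ j x, |a j x| ≤ B j := fun j x =>
    decay K ⟨hε0, hε1⟩ hmin π hπ hf hfb j x
  have hameas : ∀ j, Measurable (a j) := fun j =>
    (measurable_kiter_integral K j hf).sub measurable_const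
  have hsum : ∀ x, Summable fun j => a j x := fun x =>
    (Summable.of_nonneg_of_le (fun j => abs_nonneg _) (fun j => haB j x) hB).of_abs
  have hTdef : ∀ x, mcResolvent K π f x = ∑' j, a j x := fun x => rfl
  set S : ℝ := ∑' j, B j with hSdef
  have habsum : ∀ x, Summable fun j => |a j x| := fun x =>
    Summable.of_nonneg_of_le (fun j => abs_nonneg _) (fun j => haB j x) hB
  have hTb : ∀ x, |mcResolvent K π f x| ≤ S := fun x => by
    rw [hTdef]
    have h1 : ‖∑' j, a j x‖ ≤ ∑' j, ‖a j x‖ :=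
      norm_tsum_le_tsum_norm (f := fun j => a j x)
        (by simpa only [Real.norm_eq_abs] using habsum x)
    simp only [Real.norm_eq_abs] at h1
    exact le_trans h1 (Summable.tsum_le_tsum (fun j => haB j x) (habsum x) hB)
  have hTmeas : Measurable (mcResolvent K π f) := by
    have hpart : ∀ n : ℕ, Measurable fun x => ∑ j ∈ Finset.range n, a j x := fun n =>
      Finset.measurable_sum _ fun j _ => hameas j
    refine measurable_of_tendsto_metrizable hpart ?_
    rw [tendsto_pi_nhds]
    intro x
    exact (hsum x).hasSum.tendsto_sum_nat
  -- the zeroth term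
  have ha0 : ∀ x, a 0 x = f x - μf := fun x => by
    have : kiter K 0 x = Measure.dirac x := rfl
    simp only [hadef, this, integral_dirac' f x hf.stronglyMeasurable]
  -- integral of each term under π vanishes
  have haint0 : ∀ j, ∫ x, a j x ∂π = 0 := fun j => by
    simp only [hadef]
    rw [integral_sub (integrable_of_bound π (measurable_kiter_integral K j hf)
        (kiter_integral_bound K j hfb)) (integrable_const _),
      kiter_integral_invariant K π hπ j hf hfb, integral_const, probReal_univ]
    simp [hμf]
  -- π(T f) = 0
  have hZ : ∫ x, mcResolvent K π f x ∂π = 0 := by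
    have := tsum_integral_swap π a hameas B haB hB
    rw [show (fun x => ∑' j, a j x) = mcResolvent K π f from funext fun x => (hTdef x).symm] at this
    rw [← this]
    simp [haint0]
  -- Poisson equation: ∫ T f d(K x) = T f x - (f x - μf)
  have hpois : ∀ x, (∫ z, mcResolvent K π f z ∂(kiter K 1 x))
      = mcResolvent K π f x - (f x - μf) := by
    intro x
    have hswap := tsum_integral_swap (kiter K 1 x) a hameas B haB hB
    rw [show (fun z => ∑' j, a j z) = mcResolvent K π f from funext fun z => (hTdef z).symm]
      at hswap
    have hterm : ∀ j, ∫ z, a j z ∂(kiter K 1 x) = a (j + 1) x := by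
      intro j
      have h1 : ∫ z, (∫ y, f y ∂(kiter K j z)) ∂(kiter K 1 x)
          = ∫ y, f y ∂(kiter K (1 + j) x) := (kiter_integral_add K 1 j hf hfb x).symm
      simp only [hadef]
      rw [integral_sub (integrable_of_bound _ (measurable_kiter_integral K j hf)
          (kiter_integral_bound K j hfb)) (integrable_const _), h1, integral_const,
        probReal_univ, Nat.add_comm 1 j]
      simp
    rw [← hswap]
    simp only [hterm]
    have := Summable.tsum_eq_zero_add (hsum x)
    rw [hTdef x, this, ha0 x]
    ring
  have hpoisK : ∀ x, (∫ z, mcResolvent K π f z ∂(K x))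
      = mcResolvent K π f x - (f x - μf) := fun x => by
    rw [← kiter_one K x]; exact hpois x
  -- expansion of covFun
  have hS0 : 0 ≤ S := le_trans (abs_nonneg _) (hTb x0)
  have hT2b : ∀ x, |mcResolvent K π f x ^ 2| ≤ S ^ 2 := fun x => by
    rw [abs_pow]
    exact pow_le_pow_left₀ (abs_nonneg _) (hTb x) 2
  have hT2meas : Measurable fun x => mcResolvent K π f x ^ 2 := hTmeas.pow_const 2
  have hcov : ∀ x, covFun K π f f x
      = (∫ z, mcResolvent K π f z ^ 2 ∂(kiter K 1 x))
        - (mcResolvent K π f x - (f x - μf)) ^ 2 := by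
    intro x
    rw [covFun]
    set m : ℝ := ∫ z, mcResolvent K π f z ∂(K x) with hm
    have hmval : m = mcResolvent K π f x - (f x - μf) := hpoisK x
    have hexp : (fun y => (mcResolvent K π f y - m) * (mcResolvent K π f y - m))
        = fun y => (mcResolvent K π f y ^ 2 - (2 * m) * mcResolvent K π f y) + m ^ 2 := by
      funext y; ring
    rw [hexp]
    have hint1 : Integrable (fun y => mcResolvent K π f y ^ 2) (K x) := by
      rw [← kiter_one K x]; exact integrable_of_bound _ hT2meas hT2b
    have hint2 : Integrable (fun y => (2 * m) * mcResolvent K π f y) (K x) := by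
      rw [← kiter_one K x]
      exact (integrable_of_bound _ hTmeas hTb).const_mul _
    have hint12 : Integrable (fun y => mcResolvent K π f y ^ 2
        - 2 * m * mcResolvent K π f y) (K x) := hint1.sub hint2
    rw [integral_add hint12 (integrable_const _), integral_sub hint1 hint2,
      integral_const_mul, integral_const]
    have huniv : ((K x) Set.univ).toReal = 1 := by
      haveI : IsProbabilityMeasure (K x) := by rw [← kiter_one K x]; infer_instance
      simp [measure_univ]
    rw [measureReal_def, huniv, one_smul, ← hm]
    have hksq : ∫ y, mcResolvent K π f y ^ 2 ∂(K x)
        = ∫ z, mcResolvent K π f z ^ 2 ∂(kiter K 1 x) := by rw [kiter_one]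
    rw [hksq, hmval]
    ring
  -- abbreviations for the main integrals
  set T : E → ℝ := mcResolvent K π f with hTset
  have hfμb : ∀ x, |f x - μf| ≤ 2 * C := fun x => by
    have h1 : |μf| ≤ C := by
      have := norm_integral_le_of_norm_le_const (μ := π) (f := f) (C := C)
        (Filter.Eventually.of_forall fun y => by simpa [Real.norm_eq_abs] using hfb y)
      simpa [Real.norm_eq_abs, measure_univ, hμf] using this
    calc |f x - μf| ≤ |f x| + |μf| := abs_sub _ _
      _ ≤ 2 * C := by linarith [hfb x]
  -- integrability of all relevant functions over π
  have hintT : Integrable T π := integrable_of_bound π hTmeas hTb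
  have hintT2 : Integrable (fun x => T x ^ 2) π := integrable_of_bound π hT2meas hT2b
  have hfμmeas : Measurable fun x => f x - μf := hf.sub measurable_const
  have hintsq : Integrable (fun x => (f x - μf) ^ 2) π :=
    integrable_of_bound π (hfμmeas.pow_const 2)
      (C := (2*C)^2) (fun x => by
        rw [abs_pow]
        exact pow_le_pow_left₀ (abs_nonneg _) (hfμb x) 2)
  have hintfT : Integrable (fun x => f x * T x) π :=
    integrable_of_bound π (hf.mul hTmeas) (C := C * S) (fun x => by
      rw [abs_mul]
      exact mul_le_mul (hfb x) (hTb x) (abs_nonneg _) hC0)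
  have hintTfμ : Integrable (fun x => T x * (f x - μf)) π :=
    integrable_of_bound π (hTmeas.mul hfμmeas) (C := S * (2*C)) (fun x => by
      rw [abs_mul]
      exact mul_le_mul (hTb x) (hfμb x) (abs_nonneg _) hS0)
  -- compute ∫ covFun dπ
  have hmain : ∫ x, covFun K π f f x ∂π
      = 2 * ∫ x, f x * T x ∂π - ∫ x, (f x - μf) ^ 2 ∂π := by
    have h1 : ∫ x, covFun K π f f x ∂π
        = ∫ x, ((∫ z, T z ^ 2 ∂(kiter K 1 x)) - (T x - (f x - μf)) ^ 2) ∂π := by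
      apply integral_congr_ae
      exact Filter.Eventually.of_forall fun x => hcov x
    have hKTmeas : Measurable fun x => ∫ z, T z ^ 2 ∂(kiter K 1 x) :=
      measurable_kiter_integral K 1 hT2meas
    have hKTb : ∀ x, |∫ z, T z ^ 2 ∂(kiter K 1 x)| ≤ S ^ 2 :=
      kiter_integral_bound K 1 hT2b
    have hintKT : Integrable (fun x => ∫ z, T z ^ 2 ∂(kiter K 1 x)) π :=
      integrable_of_bound π hKTmeas hKTb
    have hintsq2 : Integrable (fun x => (T x - (f x - μf)) ^ 2) π :=
      integrable_of_bound π ((hTmeas.sub hfμmeas).pow_const 2)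
        (C := (S + 2*C)^2) (fun x => by
          rw [abs_pow]
          refine pow_le_pow_left₀ (abs_nonneg _) ?_ 2
          calc |T x - (f x - μf)| ≤ |T x| + |f x - μf| := abs_sub _ _
            _ ≤ S + 2 * C := add_le_add (hTb x) (hfμb x))
    rw [h1, integral_sub hintKT hintsq2,
      kiter_integral_invariant K π hπ 1 hT2meas hT2b]
    have hexpand : (fun x => (T x - (f x - μf)) ^ 2)
        = fun x => (T x ^ 2 - 2 * (T x * (f x - μf))) + (f x - μf) ^ 2 := by
      funext x; ring
    have hintc2 : Integrable (fun x => 2 * (T x * (f x - μf))) π := hintTfμ.const_mul 2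
    have hint12' : Integrable (fun x => T x ^ 2 - 2 * (T x * (f x - μf))) π :=
      hintT2.sub hintc2
    rw [hexpand, integral_add hint12' hintsq, integral_sub hintT2 hintc2, integral_const_mul]
    have hTfμ : ∫ x, T x * (f x - μf) ∂π = ∫ x, f x * T x ∂π - μf * ∫ x, T x ∂π := by
      have : (fun x => T x * (f x - μf)) = fun x => f x * T x - μf * T x := by
        funext x; ring
      rw [this, integral_sub hintfT (hintT.const_mul μf), integral_const_mul]
    rw [hTfμ, hZ]
    ring
  -- Part 2 preparation: ∫ f·T dπ as a tsum
  set F : ℕ → E → ℝ := fun j x => f x * a j x with hFdef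
  have hFm : ∀ j, Measurable (F j) := fun j => hf.mul (hameas j)
  have hFb : ∀ j x, |F j x| ≤ C * B j := fun j x => by
    rw [hFdef]
    simp only
    rw [abs_mul]
    exact mul_le_mul (hfb x) (haB j x) (abs_nonneg _) hC0
  have hCB : Summable fun j => C * B j := hB.mul_left C
  have hW : ∑' j, ∫ x, F j x ∂π = ∫ x, f x * T x ∂π := by
    have := tsum_integral_swap π F hFm (fun j => C * B j) hFb hCB
    rw [this]
    apply integral_congr_ae
    refine Filter.Eventually.of_forall fun x => ?_
    simp only [hFdef]
    rw [tsum_mul_left, ← hTdef x]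
  have hcsum : Summable (fun j => ∫ x, F j x ∂π) := by
    refine Summable.of_abs (Summable.of_nonneg_of_le (fun j => abs_nonneg _)
      (fun j => ?_) hCB)
    have := norm_integral_le_of_norm_le_const (μ := π) (f := F j) (C := C * B j)
      (Filter.Eventually.of_forall fun x => by simpa [Real.norm_eq_abs] using hFb j x)
    simpa [Real.norm_eq_abs, measure_univ] using this
  -- c 0 = Var
  have hintfa : ∀ j, Integrable (F j) π := fun j => integrable_of_bound π (hFm j) (hFb j)
  have hintcπ : ∀ j, Integrable (a j) π := fun j =>
    integrable_of_bound π (hameas j) (haB j)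
  have hc0 : ∫ x, F 0 x ∂π = ∫ x, (f x - μf) ^ 2 ∂π := by
    have h1 : (fun x => F 0 x) = fun x => (f x - μf) ^ 2 + μf * a 0 x := by
      funext x
      simp only [hFdef, ha0 x]
      ring
    rw [h1, integral_add hintsq ((hintcπ 0).const_mul μf), integral_const_mul, haint0 0]
    ring
  -- c (j+1) = covPi π f (K^{j+1} f)
  have hcsucc : ∀ j, ∫ x, F (j + 1) x ∂π
      = covPi π f (fun x => ∫ y, f y ∂(kiter K (j + 1) x)) := by
    intro j
    rw [covPi]
    have hμg : ∫ x, (∫ y, f y ∂(kiter K (j + 1) x)) ∂π = μf :=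
      kiter_integral_invariant K π hπ (j + 1) hf hfb
    have h1 : (fun x => (f x - μf) * ((∫ y, f y ∂(kiter K (j + 1) x))
        - ∫ x', (∫ y, f y ∂(kiter K (j + 1) x')) ∂π))
        = fun x => F (j + 1) x - μf * a (j + 1) x := by
      funext x
      simp only [hFdef, hadef, hμg]
      ring
    rw [← hμf, h1, integral_sub (hintfa (j + 1)) ((hintcπ (j + 1)).const_mul μf),
      integral_const_mul, haint0 (j + 1)]
    ring
  -- conclude
  have hWsum : ∫ x, f x * T x ∂π
      = (∫ x, (f x - μf) ^ 2 ∂π)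
        + ∑' j, covPi π f (fun x => ∫ y, f y ∂(kiter K (j + 1) x)) := by
    rw [← hW]
    have hshift := Summable.tsum_eq_zero_add hcsum
    rw [hshift, hc0]
    congr 1
    exact tsum_congr fun j => hcsucc j
  constructor
  · rw [hmain]
    have hrhs : ∫ x, (-(f x - μf) ^ 2 + 2 * f x * T x) ∂π
        = 2 * ∫ x, f x * T x ∂π - ∫ x, (f x - μf) ^ 2 ∂π := by
      have h1 : (fun x => -(f x - μf) ^ 2 + 2 * f x * T x)
          = fun x => (2 : ℝ) * (f x * T x) - (f x - μf) ^ 2 := by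
        funext x; ring
      rw [h1, integral_sub (hintfT.const_mul 2) hintsq, integral_const_mul]
    rw [hrhs]
  · rw [hmain, hWsum]
    ring
end
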